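/- For each s = 0,...,n-1, the vector v_s with entries v_s(t) = (n/2+1/4)^{-1/2} cos((s+1/2)(t+1/2)π/(n+1/2)) is a right singular vector of 1_L with singular value σ_s = (2 - 2cos((s+1/2)π/(n+1/2)))^{-1/2}; that is, 1_L^T 1_L v_s = σ_s² v_s. -/

import Mathlib

open Real Matrix

/-- For each `s`, the vector `v_s(t) = (n/2+1/4)^{-1/2} cos((s+1/2)(t+1/2)π/(n+1/2))`
is a right singular vector of the lower triangular all-ones matrix `1_L` with
singular value `σ_s = (2 - 2cos((s+1/2)π/(n+1/2)))^{-1/2}`; that is,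
`1_Lᵀ 1_L v_s = σ_s² v_s`. -/
theorem stmt3 (n : ℕ) (L : Matrix (Fin n) (Fin n) ℝ)
    (hL : ∀ i j, L i j = if j ≤ i then 1 else 0)
    (s : Fin n) (v : Fin n → ℝ)
    (hv : ∀ t : Fin n, v t =
      (((n : ℝ)/2 + 1/4) ^ (-(1/2) : ℝ)) *
        Real.cos (((s : ℝ) + 1/2) * ((t : ℝ) + 1/2) * π / ((n : ℝ) + 1/2))) :
    (Lᵀ * L).mulVec v =
      (((2 - 2 * Real.cos (((s : ℝ) + 1/2) * π / ((n : ℝ) + 1/2))) ^ (-(1/2) : ℝ)) ^ 2) • v := by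
  have hn2 : (0:ℝ) < (n : ℝ) + 1/2 := by positivity
  set a : ℝ := ((s : ℝ) + 1/2) * π / ((n : ℝ) + 1/2) with ha
  set c : ℝ := ((n : ℝ)/2 + 1/4) ^ (-(1/2) : ℝ) with hc
  set e : ℝ := Real.sin (a/2) with hedef
  have hs_lt : ((s : ℕ) : ℝ) < (n : ℝ) := by exact_mod_cast s.isLt
  have hapos : 0 < a := by
    apply div_pos _ hn2
    have := Real.pi_pos
    positivity
  have halt : a < π := by
    rw [ha, div_lt_iff₀ hn2]
    have := Real.pi_pos
    nlinarith
  have he : 0 < e := by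
    apply Real.sin_pos_of_pos_of_lt_pi <;> nlinarith [Real.pi_pos]
  have hA : 2 - 2 * Real.cos a = (2*e)^2 := by
    have h2 := Real.cos_two_mul (a/2)
    rw [show 2*(a/2) = a by ring] at h2
    have h3 := Real.sin_sq_add_cos_sq (a/2)
    rw [hedef]; nlinarith
  have hApos : 0 < 2 - 2 * Real.cos a := by rw [hA]; positivity
  -- telescoping sum 1 : partial sums of cos
  have hS : ∀ m : ℕ, 2*e*(∑ j ∈ Finset.range m, Real.cos (a*((j:ℝ)+1/2))) = Real.sin (a*m) := by
    intro m
    induction m with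
    | zero => simp
    | succ m ih =>
      rw [Finset.sum_range_succ, mul_add, ih]
      have h := Real.sin_sub_sin (a*((m:ℝ)+1)) (a*(m:ℝ))
      rw [show a*((m:ℝ)+1) - a*(m:ℝ) = a by ring,
        show (a*((m:ℝ)+1) + a*(m:ℝ))/2 = a*((m:ℝ)+1/2) by ring] at h
      push_cast
      rw [hedef]
      linarith
  -- telescoping sum 2 : partial sums of sin
  have hT : ∀ m : ℕ, 2*e*(∑ k ∈ Finset.range m, Real.sin (a*((k:ℝ)+1)))
      = Real.cos (a*(1/2)) - Real.cos (a*((m:ℝ)+1/2)) := by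
    intro m
    induction m with
    | zero => simp
    | succ m ih =>
      rw [Finset.sum_range_succ, mul_add, ih]
      have h := Real.cos_sub_cos (a*((m:ℝ)+1/2)) (a*((m:ℝ)+3/2))
      rw [show (a*((m:ℝ)+1/2) + a*((m:ℝ)+3/2))/2 = a*((m:ℝ)+1) by ring,
        show (a*((m:ℝ)+1/2) - a*((m:ℝ)+3/2))/2 = -(a/2) by ring,
        Real.sin_neg] at h
      push_cast
      rw [hedef, show a*((m:ℝ)+1+1/2) = a*((m:ℝ)+3/2) by ring]
      linarith
  -- cos (a*(n+1/2)) = 0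
  have hzero : Real.cos (a*((n:ℝ)+1/2)) = 0 := by
    have harg : a*((n:ℝ)+1/2) = ((s:ℕ):ℝ)*π + π/2 := by
      rw [ha]; field_simp
    rw [harg, Real.cos_add_pi_div_two, Real.sin_nat_mul_pi, neg_zero]
  -- the scalar on the RHS
  have hscal : (((2 - 2 * Real.cos a) ^ (-(1/2) : ℝ)) ^ 2) = (2 - 2 * Real.cos a)⁻¹ := by
    rw [← Real.rpow_natCast ((2 - 2 * Real.cos a) ^ (-(1/2) : ℝ)) 2,
      ← Real.rpow_mul hApos.le]
    norm_num
    exact Real.rpow_neg_one _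
  have hv' : ∀ t : Fin n, v t = c * Real.cos (a*(((t:ℕ):ℝ)+1/2)) := by
    intro t; rw [hv t]; congr 1; rw [ha]; ring
  rw [hscal]
  funext i
  simp only [Pi.smul_apply, smul_eq_mul]
  -- compute the LHS entrywise
  have inner : ∀ k : Fin n, (∑ j : Fin n, if j ≤ k then v j else 0)
      = ∑ m ∈ Finset.range ((k:ℕ)+1), c * Real.cos (a*((m:ℝ)+1/2)) := by
    intro k
    calc (∑ j : Fin n, if j ≤ k then v j else 0)
        = ∑ j : Fin n, (fun m : ℕ => if m ≤ (k:ℕ) then c * Real.cos (a*((m:ℝ)+1/2)) else 0) (j:ℕ) := by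
          refine Finset.sum_congr rfl fun j _ => ?_
          simp only [hv' j, Fin.le_def]
      _ = ∑ m ∈ Finset.range n, if m ≤ (k:ℕ) then c * Real.cos (a*((m:ℝ)+1/2)) else 0 :=
          Fin.sum_univ_eq_sum_range (fun m : ℕ => if m ≤ (k:ℕ) then c * Real.cos (a*((m:ℝ)+1/2)) else 0) n
      _ = ∑ m ∈ Finset.range ((k:ℕ)+1), c * Real.cos (a*((m:ℝ)+1/2)) := by
          rw [← Finset.sum_filter]
          congr 1
          ext m
          simp only [Finset.mem_filter, Finset.mem_range]
          omega
  have key : ((Lᵀ * L).mulVec v) i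
      = c * ∑ k ∈ Finset.Ico (i:ℕ) n, ∑ j ∈ Finset.range (k+1), Real.cos (a*((j:ℝ)+1/2)) := by
    calc ((Lᵀ * L).mulVec v) i
        = ∑ k : Fin n, (if i ≤ k then (1:ℝ) else 0) * ∑ j : Fin n, (if j ≤ k then (1:ℝ) else 0) * v j := by
          simp only [Matrix.mulVec, Matrix.mul_apply, dotProduct, Matrix.transpose_apply, hL,
            Finset.sum_mul]
          rw [Finset.sum_comm]
          exact Finset.sum_congr rfl fun k _ => by
            rw [Finset.mul_sum]
            exact Finset.sum_congr rfl fun j _ => by ring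
      _ = ∑ k : Fin n, (fun m : ℕ => if (i:ℕ) ≤ m then
            ∑ j ∈ Finset.range (m+1), c * Real.cos (a*((j:ℝ)+1/2)) else 0) (k:ℕ) := by
          refine Finset.sum_congr rfl fun k _ => ?_
          simp only [ite_mul, one_mul, zero_mul, boole_mul, Fin.le_def]
          by_cases h : (i:ℕ) ≤ (k:ℕ) <;> simp [h, inner k]
      _ = ∑ k ∈ Finset.range n, if (i:ℕ) ≤ k then
            ∑ j ∈ Finset.range (k+1), c * Real.cos (a*((j:ℝ)+1/2)) else 0 :=
          Fin.sum_univ_eq_sum_range (fun m : ℕ => if (i:ℕ) ≤ m then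
            ∑ j ∈ Finset.range (m+1), c * Real.cos (a*((j:ℝ)+1/2)) else 0) n
      _ = ∑ k ∈ Finset.Ico (i:ℕ) n, ∑ j ∈ Finset.range (k+1), c * Real.cos (a*((j:ℝ)+1/2)) := by
          rw [← Finset.sum_filter]
          congr 1
          ext m
          simp only [Finset.mem_filter, Finset.mem_range, Finset.mem_Ico]
          omega
      _ = c * ∑ k ∈ Finset.Ico (i:ℕ) n, ∑ j ∈ Finset.range (k+1), Real.cos (a*((j:ℝ)+1/2)) := by
          rw [Finset.mul_sum]
          exact Finset.sum_congr rfl fun k _ => by rw [Finset.mul_sum]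
  rw [key, hv' i]
  set X : ℝ := ∑ k ∈ Finset.Ico (i:ℕ) n, ∑ j ∈ Finset.range (k+1), Real.cos (a*((j:ℝ)+1/2)) with hXdef
  have step1 : (2*e) * X = ∑ k ∈ Finset.Ico (i:ℕ) n, Real.sin (a*((k:ℝ)+1)) := by
    rw [hXdef, Finset.mul_sum]
    refine Finset.sum_congr rfl fun k _ => ?_
    have h := hS (k+1)
    push_cast at h
    rw [h]
  have step2 : (2*e) * ∑ k ∈ Finset.Ico (i:ℕ) n, Real.sin (a*((k:ℝ)+1))
      = Real.cos (a*(((i:ℕ):ℝ)+1/2)) := by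
    rw [Finset.sum_Ico_eq_sub _ (le_of_lt i.isLt), mul_sub, hT n, hT (i:ℕ), hzero]
    ring
  have hX : (2 - 2*Real.cos a) * X = Real.cos (a*(((i:ℕ):ℝ)+1/2)) := by
    rw [hA, show (2*e)^2 * X = (2*e)*((2*e)*X) by ring, step1, step2]
  rw [← hX]
  rw [mul_left_comm, inv_mul_cancel_left₀ hApos.ne']
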